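/- Let n ≥ 1, let U ⊆ ℝⁿ be open, and let v : ℝⁿ → ℝ be three times continuously differentiable, strictly positive on U, and satisfy Δv = (n/2)·|Dv|²/v on U. Then for γ = −n/2 the following pointwise inequality holds on U: div( v^{−n/2}·S²_{ij}(D²v)·∂_i v ) + (−n/4)·div( v^{−n/2−1}·|Dv|²·Dv ) ≤ 0. -/

import Mathlib

/-- Partial derivative `∂_i f` of a function on `ℝⁿ`. -/
noncomputable def pd {n : ℕ} (i : Fin n) (f : (Fin n → ℝ) → ℝ) (x : Fin n → ℝ) : ℝ :=
  fderiv ℝ f x (Pi.single i 1)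

/-- Laplacian `Δf = ∑ᵢ ∂ᵢᵢ f`. -/
noncomputable def lap {n : ℕ} (f : (Fin n → ℝ) → ℝ) (x : Fin n → ℝ) : ℝ :=
  ∑ i, pd i (pd i f) x

/-- `S²_{ij}(D²v) = (Δv)·δ_{ij} − ∂_{ij}v`. -/
noncomputable def S2ij {n : ℕ} (v : (Fin n → ℝ) → ℝ) (i j : Fin n) (x : Fin n → ℝ) : ℝ :=
  lap v x * (if i = j then 1 else 0) - pd j (pd i v) x

/-- `|Df|² = ∑ᵢ (∂ᵢf)²`. -/
noncomputable def gradSq {n : ℕ} (f : (Fin n → ℝ) → ℝ) (x : Fin n → ℝ) : ℝ :=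
  ∑ i, (pd i f x) ^ 2

section aux
variable {n : ℕ} {f g : (Fin n → ℝ) → ℝ} {x : Fin n → ℝ} {i j : Fin n}

lemma pd_congr (h : f =ᶠ[nhds x] g) (i : Fin n) : pd i f x = pd i g x := by
  unfold pd; rw [h.fderiv_eq]

lemma pd_mul (hf : DifferentiableAt ℝ f x) (hg : DifferentiableAt ℝ g x) :
    pd i (fun y => f y * g y) x = pd i f x * g x + f x * pd i g x := by
  unfold pd
  rw [fderiv_fun_mul hf hg]
  simp [mul_comm]
  ring

lemma pd_sum {ι : Type*} (s : Finset ι) (F : ι → (Fin n → ℝ) → ℝ)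
    (hF : ∀ k ∈ s, DifferentiableAt ℝ (F k) x) :
    pd i (fun y => ∑ k ∈ s, F k y) x = ∑ k ∈ s, pd i (F k) x := by
  unfold pd
  rw [fderiv_fun_sum hF]
  simp

lemma pd_sub (hf : DifferentiableAt ℝ f x) (hg : DifferentiableAt ℝ g x) :
    pd i (fun y => f y - g y) x = pd i f x - pd i g x := by
  unfold pd
  rw [fderiv_fun_sub hf hg]; simp

lemma pd_mul_const (c : ℝ) (hf : DifferentiableAt ℝ f x) :
    pd i (fun y => f y * c) x = pd i f x * c := by
  unfold pd
  rw [fderiv_mul_const hf]; simp [mul_comm]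

lemma pd_rpow (hf : DifferentiableAt ℝ f x) (h0 : f x ≠ 0) (c : ℝ) :
    pd i (fun y => f y ^ c) x = c * f x ^ (c - 1) * pd i f x := by
  unfold pd
  rw [(hf.hasFDerivAt.rpow_const (Or.inl h0)).fderiv]
  simp

lemma contDiffAt_pd {m : WithTop ℕ∞} (hf : ContDiffAt ℝ (m + 1) f x) :
    ContDiffAt ℝ m (pd i f) x := by
  have h := hf.fderiv_right (m := m) le_rfl
  exact h.clm_apply contDiffAt_const

lemma pd_comm (hf : ContDiffAt ℝ 2 f x) : pd i (pd j f) x = pd j (pd i f) x := by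
  have hd : DifferentiableAt ℝ (fderiv ℝ f) x :=
    (hf.fderiv_right (m := 1) (by norm_num)).differentiableAt one_ne_zero
  have key : ∀ a b : Fin n, pd a (pd b f) x
      = fderiv ℝ (fderiv ℝ f) x (Pi.single a 1) (Pi.single b 1) := by
    intro a b
    show fderiv ℝ (fun y => (fderiv ℝ f y) (Pi.single b 1)) x (Pi.single a 1) = _
    rw [fderiv_clm_apply hd (differentiableAt_const _)]
    simp
  rw [key, key, hf.isSymmSndFDerivAt (by simp)]

end aux

set_option maxHeartbeats 2000000 in
/-- For `γ = −n/2`: if `v > 0` solves `Δv = (n/2)·|Dv|²/v` on `U`, then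
`div(v^{−n/2}·S²_{ij}(D²v)·∂ᵢv) + (−n/4)·div(v^{−n/2−1}·|Dv|²·Dv) ≤ 0` on `U`. -/
theorem stmt_10 (n : ℕ) (hn : 1 ≤ n) (U : Set (Fin n → ℝ)) (hU : IsOpen U)
    (v : (Fin n → ℝ) → ℝ) (hv : ContDiffOn ℝ 3 v U) (hpos : ∀ x ∈ U, 0 < v x)
    (hpde : ∀ x ∈ U, lap v x = ((n : ℝ) / 2) * gradSq v x / v x)
    (x : Fin n → ℝ) (hx : x ∈ U) :
    (∑ j, pd j (fun y => v y ^ (-(n : ℝ) / 2) * ∑ i, S2ij v i j y * pd i v y) x)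
      + (-(n : ℝ) / 4)
        * ∑ j, pd j (fun y => v y ^ (-(n : ℝ) / 2 - 1) * gradSq v y * pd j v y) x
    ≤ 0 := by
  -- smoothness at every point of U
  have hv3 : ∀ y ∈ U, ContDiffAt ℝ 3 v y := fun y hy => hv.contDiffAt (hU.mem_nhds hy)
  have hCp : ∀ (i : Fin n), ∀ y ∈ U, ContDiffAt ℝ 2 (pd i v) y := by
    intro i y hy
    exact contDiffAt_pd (m := 2) (by exact_mod_cast hv3 y hy)
  have hCq : ∀ (i j : Fin n), ∀ y ∈ U, ContDiffAt ℝ 1 (pd j (pd i v)) y := by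
    intro i j y hy
    exact contDiffAt_pd (m := 1) (by exact_mod_cast hCp i y hy)
  have hClap : ∀ y ∈ U, ContDiffAt ℝ 1 (lap v) y := by
    intro y hy
    have : ContDiffAt ℝ 1 (fun z => ∑ i, pd i (pd i v) z) y :=
      ContDiffAt.sum fun i _ => hCq i i y hy
    exact this
  have hCw : ∀ y ∈ U, ContDiffAt ℝ 1 (gradSq v) y := by
    intro y hy
    have : ContDiffAt ℝ 1 (fun z => ∑ i, (pd i v z) ^ 2) y :=
      ContDiffAt.sum fun i _ => ((hCp i y hy).of_le one_le_two).pow 2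
    exact this
  have hCS2 : ∀ (i j : Fin n), ∀ y ∈ U, ContDiffAt ℝ 1 (S2ij v i j) y := by
    intro i j y hy
    have : ContDiffAt ℝ 1
        (fun z => lap v z * (if i = j then (1:ℝ) else 0) - pd j (pd i v) z) y :=
      ((hClap y hy).mul contDiffAt_const).sub (hCq i j y hy)
    exact this
  -- differentiability at x
  have hDv : DifferentiableAt ℝ v x := (hv3 x hx).differentiableAt (by norm_num)
  have hvx : v x ≠ 0 := ne_of_gt (hpos x hx)
  have hDp : ∀ i : Fin n, DifferentiableAt ℝ (pd i v) x := fun i =>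
    ((hCp i x hx).of_le one_le_two).differentiableAt one_ne_zero
  have hDq : ∀ i j : Fin n, DifferentiableAt ℝ (pd j (pd i v)) x := fun i j =>
    (hCq i j x hx).differentiableAt one_ne_zero
  have hDlap : DifferentiableAt ℝ (lap v) x := (hClap x hx).differentiableAt one_ne_zero
  have hDw : DifferentiableAt ℝ (gradSq v) x := (hCw x hx).differentiableAt one_ne_zero
  have hDS2 : ∀ i j : Fin n, DifferentiableAt ℝ (S2ij v i j) x := fun i j =>
    (hCS2 i j x hx).differentiableAt one_ne_zero
  have hDA : ∀ j : Fin n, DifferentiableAt ℝ (fun y => ∑ i, S2ij v i j y * pd i v y) x := by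
    intro j
    have : ContDiffAt ℝ 1 (fun y => ∑ i, S2ij v i j y * pd i v y) x :=
      ContDiffAt.sum fun i _ => (hCS2 i j x hx).mul ((hCp i x hx).of_le one_le_two)
    exact this.differentiableAt one_ne_zero
  have hDrpow : ∀ c : ℝ, DifferentiableAt ℝ (fun y => v y ^ c) x := fun c =>
    (hDv.hasFDerivAt.rpow_const (Or.inl hvx)).differentiableAt
  -- abbreviations
  set vx : ℝ := v x with hvxdef
  set P : Fin n → ℝ := fun i => pd i v x with hP
  set q : Fin n → Fin n → ℝ := fun i j => pd j (pd i v) x with hq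
  set R : Fin n → Fin n → Fin n → ℝ := fun i j k => pd k (pd j (pd i v)) x with hR
  set L : ℝ := lap v x with hLdef
  set W : ℝ := gradSq v x with hWdef
  -- value of S2ij at x
  have hS2x : ∀ i j : Fin n, S2ij v i j x = L * (if i = j then 1 else 0) - q i j := fun i j => rfl
  -- derivative of gradSq
  have hpdw : ∀ j : Fin n, pd j (gradSq v) x = ∑ i, 2 * P i * q i j := by
    intro j
    have h0 : gradSq v = fun z => ∑ i, pd i v z * pd i v z := by
      funext z; simp [gradSq, pow_two]
    rw [h0, pd_sum _ _ (fun i _ => (hDp i).fun_mul (hDp i))]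
    refine Finset.sum_congr rfl fun i _ => ?_
    rw [pd_mul (hDp i) (hDp i)]
    simp [hP, hq]; ring
  -- derivative of lap
  have hpdlap : ∀ j : Fin n, pd j (lap v) x = ∑ k, R k k j := by
    intro j
    have h0 : lap v = fun z => ∑ k, pd k (pd k v) z := rfl
    rw [h0, pd_sum _ _ (fun k _ => hDq k k)]
  -- derivative of S2ij
  have hpdS2 : ∀ i j : Fin n, pd j (S2ij v i j) x
      = (∑ k, R k k j) * (if i = j then 1 else 0) - R i j j := by
    intro i j
    have h0 : S2ij v i j
        = fun z => lap v z * (if i = j then (1:ℝ) else 0) - pd j (pd i v) z := rfl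
    rw [h0, pd_sub (hDlap.mul_const _) (hDq i j),
      pd_mul_const _ hDlap, hpdlap j]
  -- derivative of the divergence-1 integrand
  have hpdA : ∀ j : Fin n, pd j (fun y => ∑ i, S2ij v i j y * pd i v y) x
      = ∑ i, (pd j (S2ij v i j) x * P i + S2ij v i j x * q i j) := by
    intro j
    rw [pd_sum _ _ (fun i _ => (hDS2 i j).fun_mul (hDp i))]
    refine Finset.sum_congr rfl fun i _ => ?_
    rw [pd_mul (hDS2 i j) (hDp i)]
  -- Term 1 expansion
  have hTerm1 : ∀ j : Fin n,
      pd j (fun y => v y ^ (-(n : ℝ) / 2) * ∑ i, S2ij v i j y * pd i v y) x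
      = (-(n : ℝ) / 2) * vx ^ (-(n : ℝ) / 2 - 1) * P j * (∑ i, S2ij v i j x * P i)
        + vx ^ (-(n : ℝ) / 2) * ∑ i, (pd j (S2ij v i j) x * P i + S2ij v i j x * q i j) := by
    intro j
    rw [pd_mul (hDrpow (-(n : ℝ) / 2)) (hDA j), pd_rpow hDv hvx (-(n : ℝ) / 2), hpdA j]
  -- Term 2 expansion
  have hTerm2 : ∀ j : Fin n,
      pd j (fun y => v y ^ (-(n : ℝ) / 2 - 1) * gradSq v y * pd j v y) x
      = ((-(n : ℝ) / 2 - 1) * vx ^ (-(n : ℝ) / 2 - 1 - 1) * P j * W + vx ^ (-(n : ℝ) / 2 - 1) * ∑ i, 2 * P i * q i j) * P j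
        + vx ^ (-(n : ℝ) / 2 - 1) * W * q j j := by
    intro j
    rw [pd_mul ((hDrpow (-(n : ℝ) / 2 - 1)).fun_mul hDw) (hDp j),
      pd_mul (hDrpow (-(n : ℝ) / 2 - 1)) hDw, pd_rpow hDv hvx (-(n : ℝ) / 2 - 1), hpdw j]
  -- notation for double sums
  set M : ℝ := ∑ j, ∑ i, q i j * P i * P j with hM
  set Q : ℝ := ∑ j, ∑ i, q i j * q i j with hQ
  have hWsum : W = ∑ j, P j * P j := by
    simp [hWdef, gradSq, hP, pow_two]
  have hLsum : L = ∑ j, q j j := by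
    simp [hLdef, lap, hq]
  -- value sums
  have s1 : ∀ j : Fin n, ∑ i, S2ij v i j x * P i = L * P j - ∑ i, q i j * P i := by
    intro j
    simp only [hS2x, sub_mul, Finset.sum_sub_distrib, ite_mul, mul_ite, mul_one, mul_zero,
      zero_mul, Finset.sum_ite_eq', Finset.mem_univ, if_true]
  have s2 : ∀ j : Fin n, ∑ i, (pd j (S2ij v i j) x * P i + S2ij v i j x * q i j)
      = ((∑ k, R k k j) * P j - ∑ i, R i j j * P i)
        + (L * q j j - ∑ i, q i j * q i j) := by
    intro j
    simp only [hpdS2, hS2x, sub_mul, Finset.sum_add_distrib, Finset.sum_sub_distrib, ite_mul,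
      mul_ite, mul_one, mul_zero, zero_mul, Finset.sum_ite_eq', Finset.mem_univ, if_true]
  -- third derivative symmetry
  have hswap : ∀ a b : Fin n, pd b (pd a v) =ᶠ[nhds x] pd a (pd b v) := by
    intro a b
    filter_upwards [hU.mem_nhds hx] with y hy
    exact pd_comm ((hv3 y hy).of_le (by norm_num))
  have hRsym : ∀ j k : Fin n, R k j j = R j j k := by
    intro j k
    have h1 : pd j (pd j (pd k v)) x = pd j (pd k (pd j v)) x := pd_congr (hswap k j) j
    have h2 : pd j (pd k (pd j v)) x = pd k (pd j (pd j v)) x :=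
      pd_comm (by exact_mod_cast hCp j x hx)
    exact h1.trans h2
  have hB : (∑ j, (∑ k, R k k j) * P j) = ∑ j, ∑ i, R i j j * P i := by
    simp only [Finset.sum_mul]
    rw [Finset.sum_comm]
    exact Finset.sum_congr rfl fun i _ => Finset.sum_congr rfl fun j _ => by
      rw [hRsym i j]
  -- auxiliary sum identities
  have hLW : ∑ j, P j * (L * P j - ∑ i, q i j * P i) = L * W - M := by
    have e1 : ∀ j : Fin n, P j * (L * P j - ∑ i, q i j * P i)
        = L * (P j * P j) - ∑ i, q i j * P i * P j := by
      intro j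
      have h2 : P j * ∑ i, q i j * P i = ∑ i, q i j * P i * P j := by
        rw [Finset.mul_sum]
        exact Finset.sum_congr rfl fun i _ => by ring
      linear_combination -h2
    calc ∑ j, P j * (L * P j - ∑ i, q i j * P i)
        = ∑ j, (L * (P j * P j) - ∑ i, q i j * P i * P j) :=
          Finset.sum_congr rfl fun j _ => e1 j
      _ = L * W - M := by
          rw [Finset.sum_sub_distrib, ← Finset.mul_sum, ← hWsum, ← hM]
  have hQL : ∑ j, (L * q j j - ∑ i, q i j * q i j) = L * L - Q := by
    rw [Finset.sum_sub_distrib, ← Finset.mul_sum, ← hLsum, ← hQ]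
  have hBsum : ∑ j, (((∑ k, R k k j) * P j - ∑ i, R i j j * P i)
      + (L * q j j - ∑ i, q i j * q i j)) = L * L - Q := by
    rw [Finset.sum_add_distrib, Finset.sum_sub_distrib, hB, sub_self, zero_add, hQL]
  -- summed Term 1
  have hgoal1 : (∑ j, pd j (fun y => v y ^ (-(n : ℝ) / 2) * ∑ i, S2ij v i j y * pd i v y) x)
      = (-(n : ℝ) / 2) * vx ^ (-(n : ℝ) / 2 - 1) * (L * W - M)
        + vx ^ (-(n : ℝ) / 2) * (L * L - Q) := by
    calc (∑ j, pd j (fun y => v y ^ (-(n : ℝ) / 2) * ∑ i, S2ij v i j y * pd i v y) x)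
        = ∑ j, ((-(n : ℝ) / 2) * vx ^ (-(n : ℝ) / 2 - 1)
              * (P j * (L * P j - ∑ i, q i j * P i))
            + vx ^ (-(n : ℝ) / 2) * (((∑ k, R k k j) * P j - ∑ i, R i j j * P i)
              + (L * q j j - ∑ i, q i j * q i j))) :=
          Finset.sum_congr rfl fun j _ => by rw [hTerm1 j, s1 j, s2 j]; ring
      _ = (-(n : ℝ) / 2) * vx ^ (-(n : ℝ) / 2 - 1)
              * ∑ j, (P j * (L * P j - ∑ i, q i j * P i))
            + vx ^ (-(n : ℝ) / 2) * ∑ j, (((∑ k, R k k j) * P j - ∑ i, R i j j * P i)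
              + (L * q j j - ∑ i, q i j * q i j)) := by
          rw [Finset.sum_add_distrib, Finset.mul_sum, Finset.mul_sum]
      _ = (-(n : ℝ) / 2) * vx ^ (-(n : ℝ) / 2 - 1) * (L * W - M)
            + vx ^ (-(n : ℝ) / 2) * (L * L - Q) := by
          rw [hLW, hBsum]
  -- summed Term 2
  have hgoal2 : (∑ j, pd j (fun y => v y ^ (-(n : ℝ) / 2 - 1) * gradSq v y * pd j v y) x)
      = (-(n : ℝ) / 2 - 1) * vx ^ (-(n : ℝ) / 2 - 1 - 1) * W * W
        + 2 * vx ^ (-(n : ℝ) / 2 - 1) * M + vx ^ (-(n : ℝ) / 2 - 1) * W * L := by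
    have e1 : ∀ j : Fin n,
        ((-(n : ℝ) / 2 - 1) * vx ^ (-(n : ℝ) / 2 - 1 - 1) * P j * W
            + vx ^ (-(n : ℝ) / 2 - 1) * ∑ i, 2 * P i * q i j) * P j
          + vx ^ (-(n : ℝ) / 2 - 1) * W * q j j
        = ((-(n : ℝ) / 2 - 1) * vx ^ (-(n : ℝ) / 2 - 1 - 1) * W) * (P j * P j)
          + (2 * vx ^ (-(n : ℝ) / 2 - 1)) * (∑ i, q i j * P i * P j)
          + (vx ^ (-(n : ℝ) / 2 - 1) * W) * q j j := by
      intro j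
      have h2 : (∑ i, 2 * P i * q i j) * P j = 2 * ∑ i, q i j * P i * P j := by
        rw [Finset.sum_mul, Finset.mul_sum]
        exact Finset.sum_congr rfl fun i _ => by ring
      linear_combination vx ^ (-(n : ℝ) / 2 - 1) * h2
    calc (∑ j, pd j (fun y => v y ^ (-(n : ℝ) / 2 - 1) * gradSq v y * pd j v y) x)
        = ∑ j, (((-(n : ℝ) / 2 - 1) * vx ^ (-(n : ℝ) / 2 - 1 - 1) * W) * (P j * P j)
            + (2 * vx ^ (-(n : ℝ) / 2 - 1)) * (∑ i, q i j * P i * P j)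
            + (vx ^ (-(n : ℝ) / 2 - 1) * W) * q j j) :=
          Finset.sum_congr rfl fun j _ => by rw [hTerm2 j]; exact e1 j
      _ = ((-(n : ℝ) / 2 - 1) * vx ^ (-(n : ℝ) / 2 - 1 - 1) * W) * (∑ j, P j * P j)
            + (2 * vx ^ (-(n : ℝ) / 2 - 1)) * (∑ j, ∑ i, q i j * P i * P j)
            + (vx ^ (-(n : ℝ) / 2 - 1) * W) * (∑ j, q j j) := by
          rw [Finset.sum_add_distrib, Finset.sum_add_distrib, Finset.mul_sum, Finset.mul_sum,
            Finset.mul_sum]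
      _ = (-(n : ℝ) / 2 - 1) * vx ^ (-(n : ℝ) / 2 - 1 - 1) * W * W
            + 2 * vx ^ (-(n : ℝ) / 2 - 1) * M + vx ^ (-(n : ℝ) / 2 - 1) * W * L := by
          rw [← hWsum, ← hLsum, ← hM]
  -- rpow relations
  have ha1 : vx ^ (-(n : ℝ) / 2 - 1) * vx = vx ^ (-(n : ℝ) / 2) := by
    rw [← Real.rpow_add_one hvx]
    norm_num
  have ha2 : vx ^ (-(n : ℝ) / 2 - 1 - 1) * vx = vx ^ (-(n : ℝ) / 2 - 1) := by
    rw [← Real.rpow_add_one hvx]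
    norm_num
  -- the PDE at x
  have hLval : L * vx = (n : ℝ) / 2 * W := by
    have h := hpde x hx
    rw [← hLdef, ← hWdef, ← hvxdef] at h
    rw [h]
    field_simp
  -- Cauchy-Schwarz
  have hCS : L * L ≤ (n : ℝ) * Q := by
    have h1 : (∑ j, q j j) ^ 2 ≤ (Finset.univ.card (α := Fin n) : ℝ) * ∑ j, (q j j) ^ 2 := by
      exact sq_sum_le_card_mul_sum_sq (s := (Finset.univ : Finset (Fin n))) (f := fun j => q j j)
    have h2 : ∑ j, (q j j) ^ 2 ≤ Q := by
      rw [hQ]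
      refine Finset.sum_le_sum fun j _ => ?_
      have := Finset.single_le_sum (f := fun i => q i j * q i j)
        (fun i _ => mul_self_nonneg _) (Finset.mem_univ j)
      simpa [pow_two] using this
    have hcard : (Finset.univ.card (α := Fin n) : ℝ) = (n : ℝ) := by simp
    calc L * L = (∑ j, q j j) ^ 2 := by rw [← hLsum]; ring
      _ ≤ (n : ℝ) * ∑ j, (q j j) ^ 2 := by rw [← hcard]; exact h1
      _ ≤ (n : ℝ) * Q := by
          have hn0 : (0:ℝ) ≤ (n : ℝ) := by positivity
          exact mul_le_mul_of_nonneg_left h2 hn0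
  have hvpos : 0 < vx := hpos x hx
  have ha2pos : 0 < vx ^ (-(n : ℝ) / 2 - 1 - 1) := Real.rpow_pos_of_pos hvpos _
  -- final identity
  have hfinal :
      (∑ j, pd j (fun y => v y ^ (-(n : ℝ) / 2) * ∑ i, S2ij v i j y * pd i v y) x)
        + (-(n : ℝ) / 4)
          * ∑ j, pd j (fun y => v y ^ (-(n : ℝ) / 2 - 1) * gradSq v y * pd j v y) x
      = vx ^ (-(n : ℝ) / 2 - 1 - 1) * ((n : ℝ) / 4 * W ^ 2 - vx ^ 2 * Q) := by
    rw [hgoal1, hgoal2]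
    linear_combination (Q - L * L) * ha1
      + ((3 * (n : ℝ) / 4) * L * W - vx * L * L + vx * Q) * ha2
      + (vx ^ (-(n : ℝ) / 2 - 1 - 1) * (L * vx)
          - (n : ℝ) / 4 * vx ^ (-(n : ℝ) / 2 - 1 - 1) * W) * hLval
  rw [hfinal]
  have hn0 : (0:ℝ) < (n : ℝ) := by exact_mod_cast hn
  have hb : (n : ℝ) / 4 * W ^ 2 - vx ^ 2 * Q ≤ 0 := by
    have h1 : (L * vx) ^ 2 ≤ (n : ℝ) * Q * vx ^ 2 := by nlinarith [hCS, sq_nonneg vx]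
    have h2 : ((n : ℝ) / 2 * W) ^ 2 ≤ (n : ℝ) * Q * vx ^ 2 := by rw [← hLval]; exact h1
    nlinarith [h2, hn0]
  exact mul_nonpos_of_nonneg_of_nonpos (le_of_lt ha2pos) hb
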